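/- Let c ≥ 1 and k ≥ 1 be integers. The following are equivalent: (i) O can be partitioned into k pairwise disjoint subsets O̅_1, …, O̅_k with union O such that for each j there exists an injective map h_j : O̅_j → M × Fin c with adj o ((h_j o).1) for every o ∈ O̅_j; (ii) there exists a map f : O → M with adj o (f o) for every o ∈ O such that every fiber of f has at most c·k elements, i.e., for every m ∈ M the number of o ∈ O with f o = m is at most c·k. (This equivalence underlies the correctness of testing a probing setup by a maximum-flow computation with edge capacities c·k on the sink-side edges of the bipartite grid graph: the flow value O is attainable exactly when the partition-and-matching condition holds.) -/
import Mathlib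


/-- Correctness of the max-flow test for a probing setup: `O` can be
partitioned into `k` subsets, each injectively matchable into `M × Fin c`
along adjacency (matchings into `c` copies of the metered buses), if and only
if there is an adjacency-respecting map `f : O → M` all of whose fibers have
at most `c·k` elements (the sink-side edge capacities of the flow network). -/
theorem partition_matching_iff_capacitated_assignment
    {M O : Type*} [Fintype M] [Fintype O] [DecidableEq M]
    (adj : (M ⊕ O) → (M ⊕ O) → Prop)
    (hsymm : ∀ n m, adj n m → adj m n)
    (hirr : ∀ n, ¬ adj n n)
    (c k : ℕ) (hc : 1 ≤ c) (hk : 1 ≤ k) :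
    (∃ P : Fin k → Set O,
      (∀ i j, i ≠ j → Disjoint (P i) (P j)) ∧
      (⋃ i, P i) = Set.univ ∧
      ∀ j, ∃ h : P j → M × Fin c, Function.Injective h ∧
        ∀ o : P j, adj (Sum.inr (o : O)) (Sum.inl (h o).1)) ↔
    (∃ f : O → M,
      (∀ o, adj (Sum.inr o) (Sum.inl (f o))) ∧
      ∀ m, (Finset.univ.filter fun o => f o = m).card ≤ c * k) := by
  classical
  have hc0 : 0 < c := hc
  constructor
  · rintro ⟨P, hdisj, hunion, hmatch⟩
    choose H Hinj Hadj using hmatch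
    have hex : ∀ o : O, ∃ i, o ∈ P i := by
      intro o
      have : o ∈ ⋃ i, P i := by rw [hunion]; trivial
      exact Set.mem_iUnion.mp this
    choose j hj using hex
    set f : O → M := fun o => (H (j o) ⟨o, hj o⟩).1 with hf
    have hieq : ∀ (i : Fin k) (x : O), x ∈ P i → i = j x := by
      intro i x hx
      by_contra hne
      exact (Set.disjoint_left.mp (hdisj i (j x) hne) hx) (hj x)
    have hL : ∀ (i : Fin k) (x : O) (p : x ∈ P i), (H i ⟨x, p⟩).1 = f x := by
      intro i x p
      have hi : i = j x := hieq i x p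
      subst hi
      rfl
    refine ⟨f, fun o => Hadj (j o) ⟨o, hj o⟩, ?_⟩
    intro m
    have hpart : ∀ i : Fin k,
        (Finset.univ.filter fun o => f o = m ∧ o ∈ P i).card ≤ c := by
      intro i
      have hcardeq : (Finset.univ.filter fun o => f o = m ∧ o ∈ P i).card
          = Fintype.card {o : O // f o = m ∧ o ∈ P i} := by
        rw [Fintype.card_subtype]
      rw [hcardeq]
      have : Fintype.card {o : O // f o = m ∧ o ∈ P i} ≤ Fintype.card (Fin c) := by
        apply Fintype.card_le_of_injective
          (fun x => (H i ⟨x.1, x.2.2⟩).2)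
        intro x y hxy
        have h1 : (H i ⟨x.1, x.2.2⟩).1 = (H i ⟨y.1, y.2.2⟩).1 := by
          rw [hL, hL, x.2.1, y.2.1]
        have : H i ⟨x.1, x.2.2⟩ = H i ⟨y.1, y.2.2⟩ := Prod.ext h1 hxy
        have h2 : (⟨x.1, x.2.2⟩ : P i) = ⟨y.1, y.2.2⟩ := Hinj i this
        exact Subtype.ext (congrArg (fun z : P i => z.1) h2)
      simpa using this
    have hsub : (Finset.univ.filter fun o => f o = m)
        ⊆ Finset.univ.biUnion (fun i : Fin k =>
            Finset.univ.filter fun o => f o = m ∧ o ∈ P i) := by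
      intro o ho
      simp only [Finset.mem_filter, Finset.mem_univ, true_and] at ho
      simp only [Finset.mem_biUnion, Finset.mem_filter, Finset.mem_univ, true_and]
      exact ⟨j o, ho, hj o⟩
    calc (Finset.univ.filter fun o => f o = m).card
        ≤ (Finset.univ.biUnion (fun i : Fin k =>
            Finset.univ.filter fun o => f o = m ∧ o ∈ P i)).card :=
          Finset.card_le_card hsub
      _ ≤ ∑ i : Fin k, (Finset.univ.filter fun o => f o = m ∧ o ∈ P i).card :=
          Finset.card_biUnion_le
      _ ≤ ∑ _i : Fin k, c := Finset.sum_le_sum (fun i _ => hpart i)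
      _ = k * c := by simp [Finset.sum_const, mul_comm]
      _ = c * k := mul_comm k c
  · rintro ⟨f, hadj, hcard⟩
    set s : M → Finset O := fun m => Finset.univ.filter fun o => f o = m with hs
    have hmem : ∀ o, o ∈ s (f o) := by intro o; simp [hs]
    set ord : O → ℕ := fun o => ((Fintype.equivFin O) o).val with hord
    have hordinj : Function.Injective ord := by
      intro a b hab
      exact (Fintype.equivFin O).injective (Fin.ext hab)
    set gv : O → ℕ := fun o => ((s (f o)).filter fun x => ord x < ord o).card with hgv
    have hmono : ∀ o o', f o = f o' → ord o < ord o' → gv o < gv o' := by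
      intro o o' hfe hlt
      have hset : s (f o) = s (f o') := by rw [hfe]
      apply Finset.card_lt_card
      rw [hset]
      rw [Finset.ssubset_iff_of_subset]
      · exact ⟨o, by simp [Finset.mem_filter, hset ▸ hmem o, hlt],
          by simp⟩
      · intro x hx
        simp only [Finset.mem_filter] at hx ⊢
        exact ⟨hx.1, lt_trans hx.2 hlt⟩
    have hinjfib : ∀ o o', f o = f o' → gv o = gv o' → o = o' := by
      intro o o' hfe hg
      rcases lt_trichotomy (ord o) (ord o') with h | h | h
      · exact absurd hg (ne_of_lt (hmono o o' hfe h))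
      · exact hordinj h
      · exact absurd hg.symm (ne_of_lt (hmono o' o hfe.symm h))
    have hlt : ∀ o, gv o < c * k := by
      intro o
      have h1 : gv o < (s (f o)).card := by
        apply Finset.card_lt_card
        rw [Finset.ssubset_iff_of_subset (Finset.filter_subset _ _)]
        exact ⟨o, hmem o, by simp⟩
      exact lt_of_lt_of_le h1 (hcard (f o))
    have hdivlt : ∀ o, gv o / c < k := by
      intro o
      rw [Nat.div_lt_iff_lt_mul hc0]
      calc gv o < c * k := hlt o
        _ = k * c := mul_comm c k
    refine ⟨fun i => {o | gv o / c = (i : ℕ)}, ?_, ?_, ?_⟩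
    · intro i j hij
      rw [Set.disjoint_left]
      intro x hxi hxj
      exact hij (Fin.ext (hxi.symm.trans hxj))
    · ext o
      simp only [Set.mem_iUnion, Set.mem_setOf_eq, Set.mem_univ, iff_true]
      exact ⟨⟨gv o / c, hdivlt o⟩, rfl⟩
    · intro j
      refine ⟨fun o => (f o.1, ⟨gv o.1 % c, Nat.mod_lt _ hc0⟩), ?_, fun o => hadj o.1⟩
      intro x y hxy
      have hfe : f x.1 = f y.1 := congrArg Prod.fst hxy
      have hmod : gv x.1 % c = gv y.1 % c := by
        exact congrArg Fin.val (congrArg Prod.snd hxy)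
      have hdiv : gv x.1 / c = gv y.1 / c := by
        have hx := x.2
        have hy := y.2
        simp only [Set.mem_setOf_eq] at hx hy
        exact hx.trans hy.symm
      have hgeq : gv x.1 = gv y.1 := by
        have := Nat.div_add_mod (gv x.1) c
        calc gv x.1 = c * (gv x.1 / c) + gv x.1 % c := (Nat.div_add_mod _ _).symm
          _ = c * (gv y.1 / c) + gv y.1 % c := by rw [hdiv, hmod]
          _ = gv y.1 := Nat.div_add_mod _ _
      exact Subtype.ext (hinjfib x.1 y.1 hfe hgeq)
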